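/- Let q ≥ 2 and e ≥ 0 be integers, and define f(n) = ∑_{i=0}^{e} C(n,i)(q-1)^i. Then for all integers n1 ≤ n2 with n1 ≥ 1, f(n1-1)·f(n2+1) ≤ f(n1)·f(n2). -/

import Mathlib

open Finset

private def S (a e n : ℕ) : ℕ := ∑ i ∈ range (e + 1), n.choose i * a ^ i

private lemma S_pos (a e n : ℕ) : 0 < S a e n := by
  have h0 : (0 : ℕ) ∈ range (e + 1) := by simp
  have := Finset.single_le_sum (f := fun i => n.choose i * a ^ i)
    (fun i _ => Nat.zero_le _) h0
  simp only [Nat.choose_zero_right, pow_zero, mul_one] at this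
  exact lt_of_lt_of_le Nat.one_pos (this.trans_eq rfl)

private lemma S_rec (a e n : ℕ) : S a (e+1) (n+1) = S a (e+1) n + a * S a e n := by
  unfold S
  rw [Finset.sum_range_succ' (fun i => (n+1).choose i * a ^ i),
      Finset.sum_range_succ' (fun i => n.choose i * a ^ i), Finset.mul_sum]
  simp only [Nat.choose_succ_succ, add_mul, Finset.sum_add_distrib,
    Nat.choose_zero_right, pow_zero, mul_one, pow_succ, Nat.succ_eq_add_one]
  ring_nf
  simp only [show ∀ (c p : ℕ), c * a * p = a * p * c from fun c p => by ring]
  omega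

private lemma choose_prod (m i j : ℕ) (hij : i ≤ j) :
    m.choose i * m.choose (j+1) ≤ m.choose (i+1) * m.choose j := by
  have key : (m - j) * (i + 1) ≤ (m - i) * (j + 1) :=
    Nat.mul_le_mul (Nat.sub_le_sub_left hij m) (by omega)
  have hpos : 0 < (i + 1) * (j + 1) := by positivity
  apply Nat.le_of_mul_le_mul_right _ hpos
  calc m.choose i * m.choose (j+1) * ((i+1)*(j+1))
      = m.choose i * (i+1) * (m.choose (j+1) * (j+1)) := by ring
    _ = m.choose i * (i+1) * (m.choose j * (m - j)) := by rw [Nat.choose_succ_right_eq]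
    _ = m.choose i * m.choose j * ((m - j) * (i+1)) := by ring
    _ ≤ m.choose i * m.choose j * ((m - i) * (j+1)) := Nat.mul_le_mul_left _ key
    _ = m.choose (i+1) * (i+1) * (m.choose j * (j+1)) := by
        rw [Nat.choose_succ_right_eq]; ring
    _ = m.choose (i+1) * m.choose j * ((i+1)*(j+1)) := by ring

private lemma S_key (a e n : ℕ) :
    n.choose (e+2) * a^(e+2) * S a e n ≤ n.choose (e+1) * a^(e+1) * S a (e+1) n := by
  unfold S
  rw [Finset.mul_sum, Finset.mul_sum,
    Finset.sum_range_succ' (fun i => n.choose (e+1) * a^(e+1) * (n.choose i * a ^ i))]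
  refine le_trans (Finset.sum_le_sum fun i hi => ?_) (Nat.le_add_right _ _)
  calc n.choose (e+2) * a^(e+2) * (n.choose i * a ^ i)
      = n.choose i * n.choose (e+2) * (a ^ i * a^(e+2)) := by ring
    _ ≤ n.choose (i+1) * n.choose (e+1) * (a ^ (i+1) * a^(e+1)) := by
        apply Nat.mul_le_mul
        · exact choose_prod n i (e+1) (by exact le_trans (Nat.lt_succ_iff.mp (Finset.mem_range.mp hi)) (Nat.le_succ e))
        · apply le_of_eq; rw [← pow_add, ← pow_add]; ring_nf
    _ = n.choose (e+1) * a^(e+1) * (n.choose (i+1) * a ^ (i+1)) := by ring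

private lemma S_logconcave_e (a e n : ℕ) :
    S a e n * S a (e+2) n ≤ S a (e+1) n * S a (e+1) n := by
  have h2 : S a (e+2) n = S a (e+1) n + n.choose (e+2) * a^(e+2) :=
    Finset.sum_range_succ _ _
  have h1 : S a (e+1) n = S a e n + n.choose (e+1) * a^(e+1) :=
    Finset.sum_range_succ _ _
  nlinarith [S_key a e n]

private lemma S_cross (a e n : ℕ) :
    S a (e+1) n * S a e (n+1) ≤ S a e n * S a (e+1) (n+1) := by
  rw [S_rec a e n]
  cases e with
  | zero =>
      have h0 : ∀ m, S a 0 m = 1 := by intro m; simp [S]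
      rw [h0, h0]
      nlinarith [Nat.zero_le (a * 1)]
  | succ e' =>
      rw [S_rec a e' n]
      nlinarith [S_logconcave_e a e' n]

private lemma S_consec (a e n : ℕ) :
    S a e n * S a e (n+2) ≤ S a e (n+1) * S a e (n+1) := by
  cases e with
  | zero => simp [S]
  | succ e' =>
      have h2 : S a (e'+1) (n+2) = S a (e'+1) (n+1) + a * S a e' (n+1) := S_rec a e' (n+1)
      have h1 : S a (e'+1) (n+1) = S a (e'+1) n + a * S a e' n := S_rec a e' n
      nlinarith [S_cross a e' n]

private lemma S_general (a e n m : ℕ) (hnm : n ≤ m) :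
    S a e n * S a e (m+2) ≤ S a e (n+1) * S a e (m+1) := by
  induction m, hnm using Nat.le_induction with
  | base => exact S_consec a e n
  | succ m hm ih =>
      have hpos : 0 < S a e (m+1) := S_pos a e (m+1)
      apply Nat.le_of_mul_le_mul_right _ hpos
      calc S a e n * S a e (m+3) * S a e (m+1)
          = S a e n * (S a e (m+1) * S a e (m+1+2)) := by ring_nf
        _ ≤ S a e n * (S a e (m+2) * S a e (m+2)) := by
            exact Nat.mul_le_mul_left _ (S_consec a e (m+1))
        _ = S a e n * S a e (m+2) * S a e (m+2) := by ring
        _ ≤ S a e (n+1) * S a e (m+1) * S a e (m+2) := Nat.mul_le_mul_right _ ih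
        _ = S a e (n+1) * S a e (m+2) * S a e (m+1) := by ring

theorem ball_volume_log_convex (q e : ℕ) (hq : 2 ≤ q)
    (f : ℕ → ℕ) (hf : ∀ n, f n = ∑ i ∈ range (e + 1), n.choose i * (q - 1) ^ i)
    (n1 n2 : ℕ) (h1 : 1 ≤ n1) (h12 : n1 ≤ n2) :
    f (n1 - 1) * f (n2 + 1) ≤ f n1 * f n2 := by
  have hfS : ∀ n, f n = S (q-1) e n := fun n => hf n
  obtain ⟨k, rfl⟩ : ∃ k, n1 = k + 1 := ⟨n1 - 1, by omega⟩
  obtain ⟨m, rfl⟩ : ∃ m, n2 = m + 1 := ⟨n2 - 1, by omega⟩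
  simp only [hfS, Nat.add_sub_cancel]
  have hkm : k ≤ m := by omega
  have := S_general (q-1) e k m hkm
  calc S (q-1) e k * S (q-1) e (m + 1 + 1) = S (q-1) e k * S (q-1) e (m+2) := by ring_nf
    _ ≤ S (q-1) e (k+1) * S (q-1) e (m+1) := this
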